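/- Let m ≥ 1 be an integer and let X be a random variable with the Gamma distribution of shape m and rate m (so that E[X] = 1). Set η = m·(m!)^{−1/m}. Then for every x ≥ 0, P(X > x) ≤ 1 − (1 − e^{−ηx})^m = Σ_{n=1}^{m} (−1)^{n+1} · C(m, n) · e^{−nηx}, where C(m, n) denotes the binomial coefficient. -/

import Mathlib

open MeasureTheory ProbabilityTheory Real Set

lemma fact_lt_pow : ∀ m : ℕ, 2 ≤ m → (m.factorial : ℝ) < (((m:ℝ)+1)/2)^m := by
  intro m hm
  induction m, hm using Nat.le_induction with
  | base => norm_num [Nat.factorial]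
  | succ n hn ih =>
    have hb : (0:ℝ) < (n:ℝ) + 1 := by positivity
    have hber : (2:ℝ) * ((n:ℝ)+1)^(n+1) ≤ ((n:ℝ)+2)^(n+1) := by
      have ha : (-2:ℝ) ≤ 1/((n:ℝ)+1) := le_trans (by norm_num : (-2:ℝ) ≤ 0) (by positivity)
      have h1 : (1:ℝ) + (↑(n+1)) * (1/((n:ℝ)+1)) ≤ (1 + 1/((n:ℝ)+1))^(n+1) :=
        one_add_mul_le_pow ha (n+1)
      have h2 : (1:ℝ) + (↑(n+1)) * (1/((n:ℝ)+1)) = 2 := by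
        push_cast; field_simp; ring
      rw [h2] at h1
      calc (2:ℝ) * ((n:ℝ)+1)^(n+1) ≤ (1 + 1/((n:ℝ)+1))^(n+1) * ((n:ℝ)+1)^(n+1) := by
            nlinarith [pow_pos hb (n+1)]
        _ = ((n:ℝ)+2)^(n+1) := by
            rw [← mul_pow]; congr 1; field_simp; ring
    have hfact : ((n+1).factorial : ℝ) = ((n:ℝ)+1) * (n.factorial : ℝ) := by
      rw [Nat.factorial_succ]; push_cast; ring
    have key : ((n:ℝ)+1) * (((n:ℝ)+1)/2)^n = 2 * (((n:ℝ)+1)/2)^(n+1) := by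
      rw [pow_succ]; ring
    have h3 : (2:ℝ) * (((n:ℝ)+1)/2)^(n+1) ≤ (((n:ℝ)+2)/2)^(n+1) := by
      rw [div_pow, div_pow, mul_div_assoc']
      gcongr <;> norm_num
    calc ((n+1).factorial : ℝ) = ((n:ℝ)+1) * (n.factorial:ℝ) := hfact
      _ < ((n:ℝ)+1) * (((n:ℝ)+1)/2)^n := by
          apply mul_lt_mul_of_pos_left ih hb
      _ = 2 * (((n:ℝ)+1)/2)^(n+1) := key
      _ ≤ (((n:ℝ)+2)/2)^(n+1) := h3
      _ = ((↑(n+1)+1)/2)^(n+1) := by push_cast; ring_nf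

lemma q_sign (β γ η : ℝ) (hβ : 0 < β) (hβγ : β < γ) (hsum : β + γ = η) :
    ∃ x₀ : ℝ, 0 ≤ x₀ ∧
      (∀ x ∈ Set.Icc (0:ℝ) x₀, 0 ≤ η*x + Real.exp (-(γ*x)) - Real.exp (β*x)) ∧
      (∀ x ∈ Set.Ici x₀, η*x + Real.exp (-(γ*x)) - Real.exp (β*x) ≤ 0) := by
  have hγ : 0 < γ := hβ.trans hβγ
  set q : ℝ → ℝ := fun x => η*x + Real.exp (-(γ*x)) - Real.exp (β*x) with hqdef
  set q' : ℝ → ℝ := fun x => η - γ * Real.exp (-(γ*x)) - β * Real.exp (β*x) with hq'def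
  set q'' : ℝ → ℝ := fun x => γ^2 * Real.exp (-(γ*x)) - β^2 * Real.exp (β*x) with hq''def
  have hq : ∀ x, HasDerivAt q (q' x) x := by
    intro x
    have h1 : HasDerivAt (fun x : ℝ => Real.exp (-(γ*x))) (-γ * Real.exp (-(γ*x))) x := by
      have := (((hasDerivAt_id x).const_mul γ).neg).exp
      simpa [mul_comm] using this
    have h2 : HasDerivAt (fun x : ℝ => Real.exp (β*x)) (β * Real.exp (β*x)) x := by
      have := ((hasDerivAt_id x).const_mul β).exp
      simpa [mul_comm] using this
    have h0 : HasDerivAt (fun x : ℝ => η*x) η x := by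
      simpa using (hasDerivAt_id x).const_mul η
    have := (h0.add h1).sub h2
    exact this.congr_deriv (by simp only [hq'def]; ring)
  have hq' : ∀ x, HasDerivAt q' (q'' x) x := by
    intro x
    have h1 : HasDerivAt (fun x : ℝ => Real.exp (-(γ*x))) (-γ * Real.exp (-(γ*x))) x := by
      have := (((hasDerivAt_id x).const_mul γ).neg).exp
      simpa [mul_comm] using this
    have h2 : HasDerivAt (fun x : ℝ => Real.exp (β*x)) (β * Real.exp (β*x)) x := by
      have := ((hasDerivAt_id x).const_mul β).exp
      simpa [mul_comm] using this
    have := ((hasDerivAt_const x η).sub ((h1.const_mul γ))).sub (h2.const_mul β)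
    exact this.congr_deriv (by simp only [hq''def]; ring)
  have hqc : Continuous q := by
    rw [continuous_iff_continuousAt]; exact fun x => (hq x).continuousAt
  have hq'c : Continuous q' := by
    rw [continuous_iff_continuousAt]; exact fun x => (hq' x).continuousAt
  set c : ℝ := Real.log (γ^2/β^2) / (β+γ) with hcdef
  have hratio : (1:ℝ) < γ^2/β^2 := by
    rw [lt_div_iff₀ (by positivity)]
    nlinarith
  have hc : 0 < c := div_pos (Real.log_pos hratio) (by linarith)
  -- second derivative sign
  have hq''pos : ∀ x, x < c → 0 < q'' x := by
    intro x hx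
    have h2 : Real.exp ((β+γ)*x) < γ^2/β^2 := by
      rw [← Real.exp_log (by positivity : (0:ℝ) < γ^2/β^2)]
      apply Real.exp_lt_exp.mpr
      rw [hcdef, lt_div_iff₀ (by linarith : (0:ℝ) < β+γ)] at hx
      calc (β+γ)*x = x*(β+γ) := mul_comm _ _
        _ < _ := hx
    have key : β^2 * Real.exp (β*x) * Real.exp (γ*x) < γ^2 := by
      calc β^2 * Real.exp (β*x) * Real.exp (γ*x) = β^2 * Real.exp (β*x + γ*x) := by
            rw [Real.exp_add]; ring
        _ < β^2 * (γ^2/β^2) := by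
            have : β*x + γ*x = (β+γ)*x := by ring
            rw [this]; exact mul_lt_mul_of_pos_left h2 (by positivity)
        _ = γ^2 := by field_simp
    have h3 : β^2 * Real.exp (β*x) < γ^2 * Real.exp (-(γ*x)) := by
      rw [Real.exp_neg]
      rw [← div_eq_mul_inv]
      exact (lt_div_iff₀ (Real.exp_pos _)).mpr key
    simp only [hq''def]; linarith
  have hq''neg : ∀ x, c < x → q'' x < 0 := by
    intro x hx
    have h2 : γ^2/β^2 < Real.exp ((β+γ)*x) := by
      rw [← Real.exp_log (by positivity : (0:ℝ) < γ^2/β^2)]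
      apply Real.exp_lt_exp.mpr
      rw [hcdef, div_lt_iff₀ (by linarith : (0:ℝ) < β+γ)] at hx
      linarith [hx]
    have key : γ^2 < β^2 * Real.exp (β*x) * Real.exp (γ*x) := by
      have := mul_lt_mul_of_pos_left h2 (by positivity : (0:ℝ) < β^2)
      calc γ^2 = β^2 * (γ^2/β^2) := by field_simp
        _ < β^2 * Real.exp ((β+γ)*x) := this
        _ = β^2 * Real.exp (β*x) * Real.exp (γ*x) := by
            rw [mul_assoc, ← Real.exp_add]; ring_nf
    have h3 : γ^2 * Real.exp (-(γ*x)) < β^2 * Real.exp (β*x) := by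
      rw [Real.exp_neg, ← div_eq_mul_inv]
      exact (div_lt_iff₀ (Real.exp_pos _)).mpr key
    simp only [hq''def]; linarith
  -- q' values
  have hq'0 : q' 0 = 0 := by simp only [hq'def]; simp; linarith
  have hq0 : q 0 = 0 := by simp only [hqdef]; simp
  have hq'mono : StrictMonoOn q' (Icc 0 c) := by
    apply strictMonoOn_of_deriv_pos (convex_Icc 0 c) hq'c.continuousOn
    intro x hx
    rw [interior_Icc] at hx
    rw [(hq' x).deriv]
    exact hq''pos x hx.2
  have hq'pos : ∀ x ∈ Ioc (0:ℝ) c, 0 < q' x := by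
    intro x hx
    have := hq'mono (left_mem_Icc.mpr hc.le) ⟨hx.1.le, hx.2⟩ hx.1
    rwa [hq'0] at this
  have hqmono : StrictMonoOn q (Icc 0 c) := by
    apply strictMonoOn_of_deriv_pos (convex_Icc 0 c) hqc.continuousOn
    intro x hx
    rw [interior_Icc] at hx
    rw [(hq x).deriv]
    exact hq'pos x ⟨hx.1, hx.2.le⟩
  have hqpos : ∀ x ∈ Ioc (0:ℝ) c, 0 < q x := by
    intro x hx
    have := hqmono (left_mem_Icc.mpr hc.le) ⟨hx.1.le, hx.2⟩ hx.1
    rwa [hq0] at this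
  have hqcpos : 0 < q c := hqpos c ⟨hc, le_rfl⟩
  have hq'anti : StrictAntiOn q' (Ici c) := by
    apply strictAntiOn_of_deriv_neg (convex_Ici c) hq'c.continuousOn
    intro x hx
    rw [interior_Ici] at hx
    rw [(hq' x).deriv]
    exact hq''neg x hx
  -- a point where q is negative
  set X : ℝ := max (c+1) (4*γ/β^2 + 1) with hXdef
  have hXc : c < X := lt_of_lt_of_le (by linarith) (le_max_left _ _)
  have hXpos : 0 < X := hc.trans hXc
  have hX4 : 4*γ/β^2 < X := lt_of_lt_of_le (by linarith) (le_max_right _ _)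
  have hqXneg : q X < 0 := by
    have hexp : (1 + β*X/2)^2 ≤ Real.exp (β*X) := by
      have h1 : 1 + β*X/2 ≤ Real.exp (β*X/2) := by
        have := Real.add_one_le_exp (β*X/2); linarith
      have h2 : (1 + β*X/2)^2 ≤ (Real.exp (β*X/2))^2 := by
        apply pow_le_pow_left₀ (by positivity) h1
      calc (1 + β*X/2)^2 ≤ (Real.exp (β*X/2))^2 := h2
        _ = Real.exp (β*X) := by rw [sq, ← Real.exp_add]; congr 1; ring
    have hexpγ : Real.exp (-(γ*X)) < 1 := Real.exp_lt_one_iff.mpr (by nlinarith)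
    have hXbig : γ < β^2*X/4 := by
      rw [div_lt_iff₀ (by positivity : (0:ℝ) < β^2)] at hX4
      nlinarith
    simp only [hqdef]
    nlinarith [hexp, hexpγ, hXpos]
  -- IVT: a zero of q in (c, X]
  obtain ⟨x₀, hx₀mem, hx₀⟩ : ∃ x₀ ∈ Icc c X, q x₀ = 0 := by
    have h0mem : (0:ℝ) ∈ Icc (q X) (q c) := ⟨hqXneg.le, hqcpos.le⟩
    obtain ⟨x₀, hmem, hval⟩ := intermediate_value_Icc' hXc.le hqc.continuousOn h0mem
    exact ⟨x₀, hmem, hval⟩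
  have hcx₀ : c < x₀ := by
    rcases eq_or_lt_of_le hx₀mem.1 with h | h
    · exfalso; rw [← h] at hx₀; linarith
    · exact h
  -- MVT: q' negative somewhere in (c, x₀), hence on [x₀, ∞)
  obtain ⟨ξ, hξmem, hξ⟩ := exists_hasDerivAt_eq_slope q q' hcx₀ hqc.continuousOn (fun x _ => hq x)
  have hq'ξ : q' ξ < 0 := by
    rw [hξ, hx₀]
    apply div_neg_of_neg_of_pos <;> linarith
  have hq'negx₀ : ∀ x, x₀ ≤ x → q' x < 0 := by
    intro x hx
    have : q' x < q' ξ := hq'anti (le_of_lt hξmem.1) (by simp only [mem_Ici]; linarith) (by linarith [hξmem.2])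
    linarith
  have hqanti : AntitoneOn q (Ici x₀) := by
    apply antitoneOn_of_deriv_nonpos (convex_Ici x₀) hqc.continuousOn
    · exact fun x _ => (hq x).differentiableAt.differentiableWithinAt
    · intro x hx
      rw [interior_Ici] at hx
      rw [(hq x).deriv]
      exact (hq'negx₀ x hx.le).le
  refine ⟨x₀, by linarith, ?_, ?_⟩
  · -- q ≥ 0 on [0, x₀]
    intro x hx
    show (0:ℝ) ≤ q x
    rcases le_or_gt x c with hxc | hxc
    · rcases eq_or_lt_of_le hx.1 with h | h
      · rw [← h, hq0]
      · exact (hqpos x ⟨h, hxc⟩).le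
    · -- c < x ≤ x₀
      by_contra hneg
      push_neg at hneg
      have hneg' : q x < 0 := hneg
      have hxx₀ : x < x₀ := by
        rcases eq_or_lt_of_le hx.2 with h | h
        · exfalso; rw [h, hx₀] at hneg'; linarith
        · exact h
      obtain ⟨ξ₁, hξ₁mem, hξ₁⟩ := exists_hasDerivAt_eq_slope q q' hxc hqc.continuousOn (fun y _ => hq y)
      obtain ⟨ξ₂, hξ₂mem, hξ₂⟩ := exists_hasDerivAt_eq_slope q q' hxx₀ hqc.continuousOn (fun y _ => hq y)
      have h1 : q' ξ₁ < 0 := by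
        rw [hξ₁]
        apply div_neg_of_neg_of_pos
        · linarith [hneg', hqcpos]
        · linarith
      have h2 : 0 < q' ξ₂ := by
        rw [hξ₂, hx₀]
        apply div_pos
        · linarith [hneg']
        · linarith
      have : q' ξ₂ < q' ξ₁ :=
        hq'anti (by simp only [mem_Ici]; linarith [hξ₁mem.1]) (by simp only [mem_Ici]; linarith [hξ₂mem.1, hξ₁mem.2]) (by linarith [hξ₁mem.2, hξ₂mem.1])
      linarith
  · -- q ≤ 0 on [x₀, ∞)
    intro x hx
    show q x ≤ 0
    have := hqanti (self_mem_Ici) hx hx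
    rwa [hx₀] at this

lemma alzer_binom (m : ℕ) (hm : 1 ≤ m) (t : ℝ) :
    1 - (1-t)^m = ∑ n ∈ Finset.Icc 1 m, (-1:ℝ)^(n+1) * (m.choose n : ℝ) * t^n := by
  have hexp : (1-t)^m = ∑ k ∈ Finset.range (m+1), (-1:ℝ)^k * (m.choose k : ℝ) * t^k := by
    have := add_pow (-t) 1 m
    simp only [one_pow, mul_one] at this
    calc (1-t)^m = (-t + 1)^m := by ring_nf
      _ = ∑ k ∈ Finset.range (m+1), (-t)^k * (m.choose k : ℝ) := this
      _ = ∑ k ∈ Finset.range (m+1), (-1:ℝ)^k * (m.choose k : ℝ) * t^k := by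
          apply Finset.sum_congr rfl; intro k _; rw [neg_pow]; ring
  have hins : Finset.range (m+1) = insert 0 (Finset.Icc 1 m) := by
    ext k
    simp only [Finset.mem_range, Finset.mem_insert, Finset.mem_Icc]
    omega
  rw [hexp, hins, Finset.sum_insert (by simp)]
  simp only [pow_zero, Nat.choose_zero_right, Nat.cast_one, one_mul, mul_one]
  have : ∀ k, (-1:ℝ)^(k+1) * (m.choose k : ℝ) * t^k = -((-1:ℝ)^k * (m.choose k : ℝ) * t^k) := by
    intro k; rw [pow_succ]; ring
  rw [Finset.sum_congr rfl (fun k _ => this k), Finset.sum_neg_distrib]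
  ring


lemma alzer_eta_facts (m : ℕ) (hm : 1 ≤ m) (η : ℝ)
    (hη : η = (m:ℝ) * ((m.factorial : ℝ)) ^ (-(1/(m:ℝ)))) :
    0 < η ∧ η^m * (m.factorial:ℝ) = (m:ℝ)^m ∧
      (2 ≤ m → η < m ∧ 2*(m:ℝ) < η*((m:ℝ)+1)) := by
  have hmpos : (0:ℝ) < m := by exact_mod_cast hm
  have hfac : (0:ℝ) < (m.factorial:ℝ) := by exact_mod_cast m.factorial_pos
  have hηpos : 0 < η := by rw [hη]; positivity
  refine ⟨hηpos, ?_, ?_⟩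
  · have hpow : (((m.factorial:ℝ)) ^ (-(1/(m:ℝ))))^m = ((m.factorial:ℝ))⁻¹ := by
      rw [← Real.rpow_natCast (((m.factorial:ℝ)) ^ (-(1/(m:ℝ)))) m, ← Real.rpow_mul hfac.le]
      have : (-(1/(m:ℝ))) * (m:ℝ) = -1 := by field_simp
      rw [this, Real.rpow_neg_one]
    rw [hη, mul_pow, hpow]
    field_simp
  · intro hm2
    have hfac2 : (1:ℝ) < (m.factorial:ℝ) := by
      have : 2 ≤ m.factorial := by
        calc 2 = Nat.factorial 2 := rfl
          _ ≤ m.factorial := Nat.factorial_le hm2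
      exact_mod_cast lt_of_lt_of_le one_lt_two (by exact_mod_cast this)
    constructor
    · have h1 : ((m.factorial:ℝ)) ^ (-(1/(m:ℝ))) < 1 :=
        Real.rpow_lt_one_of_one_lt_of_neg hfac2 (by
          rw [neg_lt, neg_zero]; positivity)
      calc η = (m:ℝ) * ((m.factorial:ℝ)) ^ (-(1/(m:ℝ))) := hη
        _ < (m:ℝ) * 1 := by exact mul_lt_mul_of_pos_left h1 hmpos
        _ = m := mul_one _
    · set u : ℝ := ((m.factorial:ℝ)) ^ ((1/(m:ℝ))) with hu
      have hupos : 0 < u := by rw [hu]; positivity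
      have hult : u < ((m:ℝ)+1)/2 := by
        have h1 : ((m.factorial:ℝ)) ^ ((1/(m:ℝ))) <
            ((((m:ℝ)+1)/2)^m) ^ ((1/(m:ℝ))) :=
          Real.rpow_lt_rpow hfac.le (fact_lt_pow m hm2) (by positivity)
        have h2 : ((((m:ℝ)+1)/2)^m : ℝ) ^ ((1/(m:ℝ))) = ((m:ℝ)+1)/2 := by
          rw [← Real.rpow_natCast (((m:ℝ)+1)/2) m, ← Real.rpow_mul (by positivity)]
          have : (m:ℝ) * (1/(m:ℝ)) = 1 := by field_simp
          rw [this, Real.rpow_one]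
        rw [← h2]; exact h1
      have hηu : η = (m:ℝ) * u⁻¹ := by
        rw [hη, hu, ← Real.rpow_neg hfac.le]
      rw [hηu]
      rw [show (m:ℝ) * u⁻¹ * ((m:ℝ)+1) = (m:ℝ) * ((m:ℝ)+1) / u by field_simp]
      rw [lt_div_iff₀ hupos]
      nlinarith [hult, hmpos, hupos]

noncomputable def alzerP (m : ℕ) : ℝ → ℝ :=
  fun t => ((m:ℝ)^m / ((m-1).factorial : ℝ)) * t^(m-1) * Real.exp (-((m:ℝ)*t))

lemma alzerP_cont (m : ℕ) : Continuous (alzerP m) := by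
  unfold alzerP; fun_prop

lemma alzerP_nonneg (m : ℕ) {t : ℝ} (ht : 0 ≤ t) : 0 ≤ alzerP m t := by
  unfold alzerP; positivity

lemma alzer_pdf_eq (m : ℕ) (hm : 1 ≤ m) {t : ℝ} (ht : 0 ≤ t) :
    gammaPDFReal (m:ℝ) (m:ℝ) t = alzerP m t := by
  have hc : ((m-1 : ℕ):ℝ) = (m:ℝ) - 1 := by
    push_cast [Nat.cast_sub hm]; ring
  rw [gammaPDFReal, if_pos ht, alzerP]
  have h1 : Real.Gamma (m:ℝ) = ((m-1).factorial : ℝ) := by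
    rw [show (m:ℝ) = ((m-1:ℕ):ℝ) + 1 by rw [hc]; ring]
    exact Real.Gamma_nat_eq_factorial (m-1)
  have h2 : (m:ℝ) ^ (m:ℝ) = (m:ℝ)^m := Real.rpow_natCast _ m
  have h3 : t ^ ((m:ℝ)-1) = t^(m-1) := by
    rw [← hc]; exact Real.rpow_natCast _ (m-1)
  rw [h1, h2, h3]

lemma alzer_F_eq (m : ℕ) (hm : 1 ≤ m) (x : ℝ) (hx : 0 ≤ x) :
    (gammaMeasure (m:ℝ) (m:ℝ) (Set.Iic x)).toReal = ∫ t in (0:ℝ)..x, alzerP m t := by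
  have hmpos : (0:ℝ) < m := by exact_mod_cast hm
  rw [gammaMeasure, withDensity_apply _ measurableSet_Iic]
  rw [lintegral_Iic_eq_lintegral_Iio_add_Icc _ hx]
  rw [lintegral_gammaPDF_of_nonpos (le_refl (0:ℝ)), zero_add]
  have h1 : ∫ t in Set.Icc (0:ℝ) x, gammaPDFReal (m:ℝ) (m:ℝ) t
      = (∫⁻ t in Set.Icc (0:ℝ) x, gammaPDF (m:ℝ) (m:ℝ) t).toReal := by
    rw [integral_eq_lintegral_of_nonneg_ae]
    · rfl
    · exact ae_of_all _ (fun t => gammaPDFReal_nonneg hmpos hmpos t)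
    · exact (measurable_gammaPDFReal _ _).aestronglyMeasurable.restrict
  rw [← h1]
  rw [integral_Icc_eq_integral_Ioc, ← intervalIntegral.integral_of_le hx]
  apply intervalIntegral.integral_congr
  intro t ht
  rw [Set.uIcc_of_le hx] at ht
  exact alzer_pdf_eq m hm ht.1

lemma alzer_F_tendsto (m : ℕ) (hm : 1 ≤ m) :
    Filter.Tendsto (fun x => ∫ t in (0:ℝ)..x, alzerP m t) Filter.atTop (nhds 1) := by
  have hmpos : (0:ℝ) < m := by exact_mod_cast hm
  haveI : IsProbabilityMeasure (gammaMeasure (m:ℝ) (m:ℝ)) :=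
    isProbabilityMeasure_gammaMeasure hmpos hmpos
  have h1 := tendsto_measure_Iic_atTop (gammaMeasure (m:ℝ) (m:ℝ))
  rw [measure_univ] at h1
  have h2 : Filter.Tendsto (fun x => (gammaMeasure (m:ℝ) (m:ℝ) (Set.Iic x)).toReal)
      Filter.atTop (nhds 1) := by
    have := (ENNReal.tendsto_toReal (by norm_num : (1:ENNReal) ≠ ⊤)).comp h1
    simpa [Function.comp_def] using this
  apply h2.congr'
  filter_upwards [Filter.eventually_ge_atTop (0:ℝ)] with x hx
  exact alzer_F_eq m hm x hx
lemma alzer_core (m : ℕ) (hm : 1 ≤ m) (η : ℝ)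
    (hη : η = (m:ℝ) * ((m.factorial : ℝ)) ^ (-(1/(m:ℝ)))) :
    ∀ x : ℝ, 0 ≤ x → (1 - Real.exp (-(η*x)))^m ≤ ∫ t in (0:ℝ)..x, alzerP m t := by
  obtain ⟨hηpos, hηpow, hfacts2⟩ := alzer_eta_facts m hm η hη
  have hmpos : (0:ℝ) < m := by exact_mod_cast hm
  -- the function g and its derivative
  set s : ℝ → ℝ := fun y => (1 - Real.exp (-(η*y)))^m with hsdef
  set g : ℝ → ℝ := fun y => (∫ t in (0:ℝ)..y, alzerP m t) - s y with hgdef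
  set g' : ℝ → ℝ := fun y =>
    alzerP m y - (m:ℝ)*η*Real.exp (-(η*y))*(1 - Real.exp (-(η*y)))^(m-1) with hg'def
  have hinner : ∀ y : ℝ, HasDerivAt (fun y => 1 - Real.exp (-(η*y)))
      (η * Real.exp (-(η*y))) y := by
    intro y
    have h1 : HasDerivAt (fun y : ℝ => Real.exp (-(η*y))) (-η * Real.exp (-(η*y))) y := by
      have := (((hasDerivAt_id y).const_mul η).neg).exp
      simpa [mul_comm] using this
    have := (hasDerivAt_const y (1:ℝ)).sub h1
    exact this.congr_deriv (by ring)
  have hg : ∀ y, HasDerivAt g (g' y) y := by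
    intro y
    have h1 : HasDerivAt (fun u => ∫ t in (0:ℝ)..u, alzerP m t) (alzerP m y) y := by
      apply intervalIntegral.integral_hasDerivAt_right
        ((alzerP_cont m).intervalIntegrable _ _)
        ((alzerP_cont m).stronglyMeasurable.stronglyMeasurableAtFilter)
        (alzerP_cont m).continuousAt
    have h2 : HasDerivAt s
        ((m:ℝ) * (1 - Real.exp (-(η*y)))^(m-1) * (η * Real.exp (-(η*y)))) y :=
      (hinner y).pow m
    have := h1.sub h2
    exact this.congr_deriv (by simp only [hg'def]; ring)
  have hgc : Continuous g := by
    rw [continuous_iff_continuousAt]; exact fun y => (hg y).continuousAt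
  have hg0 : g 0 = 0 := by
    simp only [hgdef, hsdef]
    rw [intervalIntegral.integral_same]
    simp [zero_pow (by omega : m ≠ 0)]
  have hstend : Filter.Tendsto s Filter.atTop (nhds 1) := by
    have hη1 : Filter.Tendsto (fun y : ℝ => η * y) Filter.atTop Filter.atTop :=
      Filter.Tendsto.const_mul_atTop hηpos Filter.tendsto_id
    have hη2 : Filter.Tendsto (fun y : ℝ => -(η * y)) Filter.atTop Filter.atBot :=
      Filter.tendsto_neg_atBot_iff.mpr hη1
    have hexp : Filter.Tendsto (fun y : ℝ => Real.exp (-(η*y))) Filter.atTop (nhds 0) :=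
      Real.tendsto_exp_atBot.comp hη2
    have h1 : Filter.Tendsto (fun y : ℝ => 1 - Real.exp (-(η*y))) Filter.atTop (nhds 1) := by
      have := (tendsto_const_nhds (x := (1:ℝ)) (f := Filter.atTop)).sub hexp
      simpa using this
    have := h1.pow m
    simpa using this
  have hgtend : Filter.Tendsto g Filter.atTop (nhds 0) := by
    have := (alzer_F_tendsto m hm).sub hstend
    simpa using this
  -- main claim: ∃ x₀ ≥ 0 with g' ≥ 0 on [0,x₀] and g' ≤ 0 on [x₀,∞)
  have hmain : ∃ x₀ : ℝ, 0 ≤ x₀ ∧ (∀ y ∈ Set.Icc (0:ℝ) x₀, 0 ≤ g' y) ∧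
      (∀ y ∈ Set.Ici x₀, y ≥ 0 → g' y ≤ 0) := by
    rcases eq_or_lt_of_le hm with hm1 | hm2
    · -- m = 1 : g' = 0 everywhere on [0,∞)
      refine ⟨0, le_rfl, ?_, ?_⟩ <;> intro y hy
      · have hy0 : y = 0 := le_antisymm hy.2 hy.1
        subst hy0
        have : η = 1 := by
          rw [← hm1] at hηpow
          simpa using hηpow
        simp only [hg'def, alzerP, ← hm1, this]
        norm_num
      · intro hy0
        have hη1 : η = 1 := by
          rw [← hm1] at hηpow
          simpa using hηpow
        simp only [hg'def, alzerP, ← hm1, hη1]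
        norm_num
    · -- m ≥ 2
      have hm2' : 2 ≤ m := hm2
      obtain ⟨hηm, h2m⟩ := hfacts2 hm2'
      have hm1R : (1:ℝ) < m := by exact_mod_cast hm2'
      set β : ℝ := ((m:ℝ) - η)/((m:ℝ) - 1) with hβdef
      set γ : ℝ := η - β with hγdef
      have hβpos : 0 < β := div_pos (by linarith) (by linarith)
      have hβeq : β * ((m:ℝ)-1) = (m:ℝ) - η := div_mul_cancel₀ _ (by linarith)
      have hβγ : β < γ := by
        rw [hγdef]
        nlinarith [hβeq, h2m, hm1R]
      have hsum : β + γ = η := by rw [hγdef]; ring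
      obtain ⟨x₀, hx₀0, hqge, hqle⟩ := q_sign β γ η hβpos hβγ hsum
      -- factorization of g'
      have hfactor : ∀ y : ℝ, g' y = (m:ℝ)*η*Real.exp (-(η*y)) *
          ((η*y*Real.exp (-(β*y)))^(m-1) - (1 - Real.exp (-(η*y)))^(m-1)) := by
        intro y
        have hmfac : (m.factorial : ℝ) = (m:ℝ) * ((m-1).factorial : ℝ) := by
          have hm1 : m - 1 + 1 = m := by omega
          calc (m.factorial : ℝ) = (((m-1)+1).factorial : ℝ) := by rw [hm1]
            _ = (((m-1)+1 : ℕ) : ℝ) * ((m-1).factorial : ℝ) := by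
                rw [Nat.factorial_succ]; push_cast; ring
            _ = (m:ℝ) * ((m-1).factorial : ℝ) := by rw [hm1]
        have hfacpos : (0:ℝ) < ((m-1).factorial : ℝ) := by exact_mod_cast (m-1).factorial_pos
        have hmη : (m:ℝ)*η^m = (m:ℝ)^m / ((m-1).factorial : ℝ) := by
          rw [eq_div_iff (ne_of_gt hfacpos)]
          calc (m:ℝ)*η^m * ((m-1).factorial : ℝ) = η^m * ((m:ℝ) * ((m-1).factorial : ℝ)) := by ring
            _ = η^m * (m.factorial : ℝ) := by rw [← hmfac]
            _ = (m:ℝ)^m := hηpow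
        have hcast : ((m-1 : ℕ):ℝ) = (m:ℝ) - 1 := by
          push_cast [Nat.cast_sub hm]; ring
        have hexps : Real.exp (-(η*y)) * (Real.exp (-(β*y)))^(m-1) = Real.exp (-((m:ℝ)*y)) := by
          rw [← Real.exp_nat_mul, ← Real.exp_add]
          congr 1
          rw [hcast]
          linear_combination (-y) * hβeq
        have hηpowsplit : η^m = η * η^(m-1) := by
          rw [← pow_succ']
          congr 1
          omega
        calc g' y = alzerP m y - (m:ℝ)*η*Real.exp (-(η*y))*(1 - Real.exp (-(η*y)))^(m-1) := rfl
          _ = (m:ℝ)*η*Real.exp (-(η*y)) * (η*y*Real.exp (-(β*y)))^(m-1)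
              - (m:ℝ)*η*Real.exp (-(η*y))*(1 - Real.exp (-(η*y)))^(m-1) := by
            congr 1
            show alzerP m y = _
            rw [alzerP]
            rw [mul_pow, mul_pow]
            calc ((m:ℝ)^m / ((m-1).factorial : ℝ)) * y^(m-1) * Real.exp (-((m:ℝ)*y))
                = ((m:ℝ)*η^m) * y^(m-1) * (Real.exp (-(η*y)) * (Real.exp (-(β*y)))^(m-1)) := by
                  rw [hmη, hexps]
              _ = (m:ℝ)*η*Real.exp (-(η*y)) * (η^(m-1) * y^(m-1) * (Real.exp (-(β*y)))^(m-1)) := by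
                  rw [hηpowsplit]; ring
          _ = _ := by ring
      -- sign of g' from sign of q
      refine ⟨x₀, hx₀0, ?_, ?_⟩
      · intro y hy
        have hy0 : 0 ≤ y := hy.1
        have hq : 0 ≤ η*y + Real.exp (-(γ*y)) - Real.exp (β*y) := hqge y hy
        have hA : 0 ≤ η*y*Real.exp (-(β*y)) :=
          mul_nonneg (mul_nonneg hηpos.le hy0) (Real.exp_pos _).le
        have hB : 0 ≤ 1 - Real.exp (-(η*y)) := by
          have : Real.exp (-(η*y)) ≤ 1 :=
            Real.exp_le_one_iff.mpr (by nlinarith [mul_nonneg hηpos.le hy0])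
          linarith
        have hABq : η*y*Real.exp (-(β*y)) - (1 - Real.exp (-(η*y)))
            = Real.exp (-(β*y)) * (η*y + Real.exp (-(γ*y)) - Real.exp (β*y)) := by
          have e1 : Real.exp (-(β*y)) * Real.exp (-(γ*y)) = Real.exp (-(η*y)) := by
            rw [← Real.exp_add]; congr 1; linear_combination (-y) * hsum
          have e2 : Real.exp (-(β*y)) * Real.exp (β*y) = 1 := by
            rw [← Real.exp_add]; simp
          linear_combination e2 - e1
        have hBA : (1 - Real.exp (-(η*y))) ≤ η*y*Real.exp (-(β*y)) := by
          linarith [hABq, mul_nonneg (Real.exp_pos (-(β*y))).le hq]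
        have hpow : (1 - Real.exp (-(η*y)))^(m-1) ≤ (η*y*Real.exp (-(β*y)))^(m-1) :=
          pow_le_pow_left₀ hB hBA (m-1)
        rw [hfactor y]
        exact mul_nonneg (mul_nonneg (mul_nonneg hmpos.le hηpos.le) (Real.exp_pos _).le)
          (sub_nonneg.mpr hpow)
      · intro y hy hy0
        have hq : η*y + Real.exp (-(γ*y)) - Real.exp (β*y) ≤ 0 := hqle y hy
        have hA : 0 ≤ η*y*Real.exp (-(β*y)) :=
          mul_nonneg (mul_nonneg hηpos.le hy0) (Real.exp_pos _).le
        have hABq : η*y*Real.exp (-(β*y)) - (1 - Real.exp (-(η*y)))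
            = Real.exp (-(β*y)) * (η*y + Real.exp (-(γ*y)) - Real.exp (β*y)) := by
          have e1 : Real.exp (-(β*y)) * Real.exp (-(γ*y)) = Real.exp (-(η*y)) := by
            rw [← Real.exp_add]; congr 1; linear_combination (-y) * hsum
          have e2 : Real.exp (-(β*y)) * Real.exp (β*y) = 1 := by
            rw [← Real.exp_add]; simp
          linear_combination e2 - e1
        have hAB : η*y*Real.exp (-(β*y)) ≤ (1 - Real.exp (-(η*y))) := by
          linarith [hABq, mul_nonpos_of_nonneg_of_nonpos (Real.exp_pos (-(β*y))).le hq]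
        have hpow : (η*y*Real.exp (-(β*y)))^(m-1) ≤ (1 - Real.exp (-(η*y)))^(m-1) :=
          pow_le_pow_left₀ hA hAB (m-1)
        rw [hfactor y]
        exact mul_nonpos_of_nonneg_of_nonpos
          (mul_nonneg (mul_nonneg hmpos.le hηpos.le) (Real.exp_pos _).le)
          (sub_nonpos.mpr hpow)
  -- conclude g ≥ 0 on [0,∞)
  obtain ⟨x₀, hx₀0, hge, hle⟩ := hmain
  have hmono : MonotoneOn g (Set.Icc 0 x₀) := by
    apply monotoneOn_of_deriv_nonneg (convex_Icc 0 x₀) hgc.continuousOn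
    · exact fun y _ => (hg y).differentiableAt.differentiableWithinAt
    · intro y hy
      rw [interior_Icc] at hy
      rw [(hg y).deriv]
      exact hge y ⟨hy.1.le, hy.2.le⟩
  have hanti : AntitoneOn g (Set.Ici x₀) := by
    apply antitoneOn_of_deriv_nonpos (convex_Ici x₀) hgc.continuousOn
    · exact fun y _ => (hg y).differentiableAt.differentiableWithinAt
    · intro y hy
      rw [interior_Ici] at hy
      have hyx : x₀ < y := hy
      rw [(hg y).deriv]
      exact hle y hyx.le (by linarith)
  intro x hx
  have hgx : 0 ≤ g x := by
    rcases le_or_gt x x₀ with hxx | hxx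
    · have := hmono (Set.left_mem_Icc.mpr hx₀0) ⟨hx, hxx⟩ hx
      rwa [hg0] at this
    · apply le_of_tendsto hgtend
      filter_upwards [Filter.eventually_ge_atTop x] with y hy
      exact hanti (Set.mem_Ici.mpr hxx.le) (Set.mem_Ici.mpr (by linarith)) hy
  have : g x = (∫ t in (0:ℝ)..x, alzerP m t) - s x := rfl
  have hsx : s x = (1 - Real.exp (-(η*x)))^m := rfl
  linarith [hgx, this.symm.le]

/-- Alzer's lemma, as used to bound the CCDF of the unit-mean Nakagami-`m` fading
power gain: if `X` is Gamma with integer shape `m ≥ 1` and rate `m`, and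
`η = m·(m!)^{−1/m}`, then for every `x ≥ 0`,
`P(X > x) ≤ 1 − (1 − e^{−ηx})^m = Σ_{n=1}^{m} (−1)^{n+1} C(m,n) e^{−nηx}`. -/
theorem alzer_ccdf_bound
    {Ω' : Type*} [MeasureSpace Ω'] [IsProbabilityMeasure (ℙ : Measure Ω')]
    (m : ℕ) (hm : 1 ≤ m)
    (X : Ω' → ℝ) (hX : Measurable X)
    (hlaw : Measure.map X ℙ = gammaMeasure (m : ℝ) (m : ℝ))
    (η : ℝ) (hη : η = (m : ℝ) * ((Nat.factorial m : ℝ)) ^ (-(1 / (m : ℝ)))) :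
    ∀ x : ℝ, 0 ≤ x →
      (ℙ {ω | x < X ω}).toReal ≤ 1 - (1 - Real.exp (-(η * x))) ^ m ∧
      1 - (1 - Real.exp (-(η * x))) ^ m =
        ∑ n ∈ Finset.Icc 1 m,
          (-1 : ℝ) ^ (n + 1) * (m.choose n : ℝ) * Real.exp (-(n * η * x)) := by
  intro x hx
  have hmpos : (0:ℝ) < m := by exact_mod_cast hm
  haveI : IsProbabilityMeasure (gammaMeasure (m:ℝ) (m:ℝ)) :=
    isProbabilityMeasure_gammaMeasure hmpos hmpos
  constructor
  · -- the CCDF bound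
    have hset : {ω | x < X ω} = X ⁻¹' (Set.Ioi x) := rfl
    rw [hset, ← Measure.map_apply hX measurableSet_Ioi, hlaw,
      show Set.Ioi x = (Set.Iic x)ᶜ from Set.compl_Iic.symm,
      measure_compl measurableSet_Iic (measure_ne_top _ _), measure_univ,
      ENNReal.toReal_sub_of_le prob_le_one ENNReal.one_ne_top, ENNReal.toReal_one]
    have hF := alzer_F_eq m hm x hx
    have hcore := alzer_core m hm η hη x hx
    rw [hF]
    linarith
  · -- the binomial expansion
    rw [alzer_binom m hm (Real.exp (-(η*x)))]
    apply Finset.sum_congr rfl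
    intro n _
    congr 1
    rw [← Real.exp_nat_mul]
    congr 1
    ring
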